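/- For any k ≥ 2 and l ∈ ℕ with k + l even, the twisted cubic cylinder W̄_{k,l} contains a Hamiltonian double ray. -/

import Mathlib

/-- One "direction" of the edges of the twisted cubic cylinder `W̄_{k,l}`:
horizontal edges, straight vertical edges and twisted edges. -/
def cylStep (k : ℕ) (l : ℤ) (p q : ℤ × ZMod k) : Prop :=
  -- horizontal edges {(n,m),(n+1,m)}
  (q.1 = p.1 + 1 ∧ q.2 = p.2) ∨
  -- straight vertical edges
  (∃ (n : ℤ) (m : ℕ), m + 2 ≤ k ∧
    ((Even m ∧ p = (2 * n, (m : ZMod k)) ∧ q = (2 * n, ((m + 1 : ℕ) : ZMod k))) ∨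
     (Odd m ∧ p = (2 * n + 1, (m : ZMod k)) ∧ q = (2 * n + 1, ((m + 1 : ℕ) : ZMod k))))) ∨
  -- twisted edges
  ((Even k ∧ ∃ n : ℤ, p = (2 * n + 1, ((k - 1 : ℕ) : ZMod k)) ∧ q = (2 * n + 1 + l, 0)) ∨
   (Odd k ∧ ∃ n : ℤ, p = (2 * n, ((k - 1 : ℕ) : ZMod k)) ∧ q = (2 * n + l, 0)))

/-- The twisted cubic cylinder `W̄_{k,l}` of height `k` and twist `l`. -/
def twistedCylinder (k : ℕ) (l : ℤ) : SimpleGraph (ℤ × ZMod k) where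
  Adj p q := p ≠ q ∧ (cylStep k l p q ∨ cylStep k l q p)
  symm := ⟨by rintro p q ⟨hne, h⟩; exact ⟨hne.symm, h.symm⟩⟩
  loopless := ⟨by rintro p ⟨hne, -⟩; exact hne rfl⟩

/-- A Hamiltonian double ray in a graph `Γ`: a bijection `f : ℤ → V Γ` such that
consecutive images are adjacent. -/
def HasHamiltonianDoubleRay {V : Type*} (Γ : SimpleGraph V) : Prop :=
  ∃ f : ℤ → V, Function.Bijective f ∧ ∀ n : ℤ, Γ.Adj (f n) (f (n + 1))

namespace TwistHamAux

/-- Direction of traversal of row `m`: rows below `h` go right, others go left. -/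
def dd (h m : ℕ) : ℤ := if m < h then 1 else -1

/-- Starting column of row `m` of the snake. -/
def sfun (X h m : ℕ) : ℤ := 1 + ((X : ℤ) - 1) * (2 * ((min m h : ℕ) : ℤ) - (m : ℤ))

lemma dd_cases (h m : ℕ) : dd h m = 1 ∨ dd h m = -1 := by
  unfold dd; split <;> simp

lemma dd_sq (h m : ℕ) : dd h m * dd h m = 1 := by
  rcases dd_cases h m with hd | hd <;> rw [hd] <;> ring

lemma sfun_succ (X h m : ℕ) : sfun X h (m + 1) = sfun X h m + dd h m * ((X : ℤ) - 1) := by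
  unfold sfun dd
  rcases Nat.lt_or_ge m h with hm | hm
  · rw [if_pos hm]
    have h1 : min (m + 1) h = m + 1 := by omega
    have h2 : min m h = m := by omega
    rw [h1, h2]; push_cast; ring
  · rw [if_neg (by omega)]
    have h1 : min (m + 1) h = h := by omega
    have h2 : min m h = h := by omega
    rw [h1, h2]; push_cast; ring

lemma sfun_parity (X h m y : ℕ) (hy : X = y + y) :
    ∃ c : ℤ, sfun X h m = 1 + (m : ℤ) + 2 * c := by
  refine ⟨((min m h : ℕ) : ℤ) * ((X : ℤ) - 1) - (y : ℤ) * (m : ℤ) , ?_⟩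
  unfold sfun; subst hy; push_cast; ring

lemma sfun_zero (X h : ℕ) : sfun X h 0 = 1 := by simp [sfun]

/-- The Hamiltonian double ray: snake through the fundamental domains. -/
def FF (k X h : ℕ) (ε : ℤ) (t : ℤ) : ℤ × ZMod k :=
  (ε * (X : ℤ) * (t / ((k : ℤ) * (X : ℤ))) +
      sfun X h ((t % ((k : ℤ) * (X : ℤ)) / (X : ℤ)).toNat) +
      dd h ((t % ((k : ℤ) * (X : ℤ)) / (X : ℤ)).toNat) * (t % ((k : ℤ) * (X : ℤ)) % (X : ℤ)),
   (((t % ((k : ℤ) * (X : ℤ)) / (X : ℤ)).toNat : ℕ) : ZMod k))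

lemma euclid {a b q r : ℤ} (hb : 0 < b) (h0 : 0 ≤ r) (h1 : r < b) (he : a = b * q + r) :
    a / b = q ∧ a % b = r := by
  subst he
  constructor
  · rw [add_comm, Int.add_mul_ediv_left r q hb.ne', Int.ediv_eq_zero_of_lt h0 h1, zero_add]
  · rw [add_comm, Int.add_mul_emod_self_left, Int.emod_eq_of_lt h0 h1]

lemma FF_eval (k X h : ℕ) (ε : ℤ) (hk : 0 < k) (q' : ℤ) (m' i' : ℕ)
    (hm : m' < k) (hi : i' < X) :
    FF k X h ε ((k : ℤ) * (X : ℤ) * q' + ((X : ℤ) * (m' : ℤ) + (i' : ℤ))) =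
      (ε * (X : ℤ) * q' + sfun X h m' + dd h m' * (i' : ℤ), ((m' : ℕ) : ZMod k)) := by
  have hX : 0 < X := by omega
  have hXZ : (0 : ℤ) < (X : ℤ) := by exact_mod_cast hX
  have hP : (0 : ℤ) < (k : ℤ) * (X : ℤ) := mul_pos (by exact_mod_cast hk) hXZ
  have hiZ : (i' : ℤ) < (X : ℤ) := by exact_mod_cast hi
  have hr0 : (0 : ℤ) ≤ (X : ℤ) * (m' : ℤ) + (i' : ℤ) := by positivity
  have hrP : (X : ℤ) * (m' : ℤ) + (i' : ℤ) < (k : ℤ) * (X : ℤ) := by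
    have h2 : (X : ℤ) * ((m' : ℤ) + 1) ≤ (X : ℤ) * (k : ℤ) := by
      apply mul_le_mul_of_nonneg_left _ hXZ.le
      exact_mod_cast hm
    nlinarith
  obtain ⟨hd1, hd2⟩ := euclid (q := q') (r := (X : ℤ) * (m' : ℤ) + (i' : ℤ)) hP hr0 hrP rfl
  obtain ⟨he1, he2⟩ := euclid (q := (m' : ℤ)) (r := (i' : ℤ)) hXZ (by positivity) hiZ rfl
  simp only [FF, hd1, hd2, he1, he2, Int.toNat_natCast]

lemma decomp (k X : ℕ) (hk : 0 < k) (hX : 0 < X) (t : ℤ) :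
    ∃ (q' : ℤ) (m' i' : ℕ), m' < k ∧ i' < X ∧
      t = (k : ℤ) * (X : ℤ) * q' + ((X : ℤ) * (m' : ℤ) + (i' : ℤ)) := by
  have hXZ : (0 : ℤ) < (X : ℤ) := by exact_mod_cast hX
  have hP : (0 : ℤ) < (k : ℤ) * (X : ℤ) := mul_pos (by exact_mod_cast hk) hXZ
  set r := t % ((k : ℤ) * (X : ℤ)) with hr
  have hr0 : 0 ≤ r := Int.emod_nonneg t hP.ne'
  have hrP : r < (k : ℤ) * (X : ℤ) := Int.emod_lt_of_pos t hP
  have hq0 : 0 ≤ r / (X : ℤ) := Int.ediv_nonneg hr0 hXZ.le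
  have hm0 : 0 ≤ r % (X : ℤ) := Int.emod_nonneg r hXZ.ne'
  refine ⟨t / ((k : ℤ) * (X : ℤ)), (r / (X : ℤ)).toNat, (r % (X : ℤ)).toNat, ?_, ?_, ?_⟩
  · have h1 : r / (X : ℤ) < (k : ℤ) := by
      rw [Int.ediv_lt_iff_lt_mul hXZ]; exact hrP
    omega
  · have h1 : r % (X : ℤ) < (X : ℤ) := Int.emod_lt_of_pos r hXZ
    omega
  · have h2 : (X : ℤ) * (r / (X : ℤ)) + r % (X : ℤ) = r := Int.mul_ediv_add_emod r (X : ℤ)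
    have h3 : ((k : ℤ) * (X : ℤ)) * (t / ((k : ℤ) * (X : ℤ))) + r = t := Int.mul_ediv_add_emod t _
    rw [Int.toNat_of_nonneg hq0, Int.toNat_of_nonneg hm0]
    linarith

theorem core (k l X h y : ℕ) (ε : ℤ) (hk : 2 ≤ k) (hX : 0 < X) (hy : X = y + y)
    (hε : ε * ε = 1)
    (hsum : sfun X h k + (l : ℤ) = 1 + ε * (X : ℤ)) :
    HasHamiltonianDoubleRay (twistedCylinder k (l : ℤ)) := by
  haveI : NeZero k := ⟨by omega⟩
  have hk0 : 0 < k := by omega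
  have hXZ : (0 : ℤ) < (X : ℤ) := by exact_mod_cast hX
  have hyz : (X : ℤ) = 2 * (y : ℤ) := by push_cast [hy]; ring
  refine ⟨FF k X h ε, ⟨?_, ?_⟩, ?_⟩
  · -- injective
    intro t1 t2 ht
    obtain ⟨q1, m1, i1, hm1, hi1, rfl⟩ := decomp k X hk0 hX t1
    obtain ⟨q2, m2, i2, hm2, hi2, rfl⟩ := decomp k X hk0 hX t2
    rw [FF_eval k X h ε hk0 q1 m1 i1 hm1 hi1, FF_eval k X h ε hk0 q2 m2 i2 hm2 hi2] at ht
    rw [Prod.mk.injEq] at ht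
    obtain ⟨h1, h2⟩ := ht
    have hmeq : m1 = m2 := by
      have h3 := congrArg ZMod.val h2
      rwa [ZMod.val_cast_of_lt hm1, ZMod.val_cast_of_lt hm2] at h3
    subst hmeq
    have key : (X : ℤ) * (dd h m1 * ε * (q1 - q2)) = (i2 : ℤ) - (i1 : ℤ) := by
      linear_combination dd h m1 * h1 + ((i2 : ℤ) - (i1 : ℤ)) * dd_sq h m1
    have hb1 : -(X : ℤ) < (i2 : ℤ) - (i1 : ℤ) := by
      have : (i2 : ℤ) ≥ 0 := by positivity
      have : (i1 : ℤ) < X := by exact_mod_cast hi1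
      omega
    have hb2 : (i2 : ℤ) - (i1 : ℤ) < (X : ℤ) := by
      have : (i1 : ℤ) ≥ 0 := by positivity
      have : (i2 : ℤ) < X := by exact_mod_cast hi2
      omega
    have hz1 : dd h m1 * ε * (q1 - q2) < 1 := by
      have : (X : ℤ) * (dd h m1 * ε * (q1 - q2)) < (X : ℤ) * 1 := by
        rw [key, mul_one]; exact hb2
      exact lt_of_mul_lt_mul_left this hXZ.le
    have hz2 : -1 < dd h m1 * ε * (q1 - q2) := by
      have : (X : ℤ) * (-1) < (X : ℤ) * (dd h m1 * ε * (q1 - q2)) := by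
        rw [key]; omega
      exact lt_of_mul_lt_mul_left this hXZ.le
    have hz0 : dd h m1 * ε * (q1 - q2) = 0 := by omega
    have hieq : (i1 : ℤ) = (i2 : ℤ) := by
      rw [hz0, mul_zero] at key; omega
    have hqeq : q1 = q2 := by
      have h4 : dd h m1 * (dd h m1 * ε * (q1 - q2)) = 0 := by rw [hz0, mul_zero]
      have h5 : ε * (q1 - q2) = 0 := by
        rcases dd_cases h m1 with hd | hd <;> rw [hd] at hz0
        · linear_combination hz0
        · linear_combination -hz0
      have h6 : q1 - q2 = 0 := by linear_combination ε * h5 - (q1 - q2) * hε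
      omega
    rw [hieq, hqeq]
  · -- surjective
    rintro ⟨c, z⟩
    set m := z.val with hm
    have hmk : m < k := ZMod.val_lt z
    set j := dd h m * (c - sfun X h m) with hj
    set Q := j / (X : ℤ) with hQ
    have hi0 : 0 ≤ j % (X : ℤ) := Int.emod_nonneg j hXZ.ne'
    set i := (j % (X : ℤ)).toNat with hi
    have hi' : (i : ℤ) = j % (X : ℤ) := Int.toNat_of_nonneg hi0
    have hiX : i < X := by
      have := Int.emod_lt_of_pos j hXZ
      omega
    refine ⟨(k : ℤ) * (X : ℤ) * (ε * dd h m * Q) + ((X : ℤ) * (m : ℤ) + (i : ℤ)), ?_⟩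
    rw [FF_eval k X h ε hk0 (ε * dd h m * Q) m i hmk hiX]
    have hje : (X : ℤ) * Q + j % (X : ℤ) = j := Int.mul_ediv_add_emod j (X : ℤ)
    rw [Prod.mk.injEq]
    constructor
    · rw [hi']
      linear_combination dd h m * (X : ℤ) * Q * hε + dd h m * hje +
        (c - sfun X h m) * dd_sq h m + dd h m * hj
    · exact ZMod.natCast_rightInverse z
  · -- adjacency
    intro t
    obtain ⟨q', m', i', hm', hi', rfl⟩ := decomp k X hk0 hX t
    rw [FF_eval k X h ε hk0 q' m' i' hm' hi']
    by_cases hiX : i' + 1 < X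
    · -- horizontal edge
      have ht1 : (k : ℤ) * (X : ℤ) * q' + ((X : ℤ) * (m' : ℤ) + (i' : ℤ)) + 1 =
          (k : ℤ) * (X : ℤ) * q' + ((X : ℤ) * (m' : ℤ) + ((i' + 1 : ℕ) : ℤ)) := by
        push_cast; ring
      rw [ht1, FF_eval k X h ε hk0 q' m' (i' + 1) hm' hiX]
      constructor
      · intro hpq
        rw [Prod.mk.injEq] at hpq
        obtain ⟨h1, -⟩ := hpq
        have h2 : dd h m' * (i' : ℤ) = dd h m' * ((i' : ℤ) + 1) := by
          push_cast at h1; linarith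
        rcases dd_cases h m' with hd | hd <;> rw [hd] at h2 <;> linarith
      · rcases dd_cases h m' with hd | hd
        · left; unfold cylStep; left
          constructor
          · show ε * (X : ℤ) * q' + sfun X h m' + dd h m' * ((i' + 1 : ℕ) : ℤ) =
              ε * (X : ℤ) * q' + sfun X h m' + dd h m' * (i' : ℤ) + 1
            rw [hd]; push_cast; ring
          · rfl
        · right; unfold cylStep; left
          constructor
          · show ε * (X : ℤ) * q' + sfun X h m' + dd h m' * (i' : ℤ) =
              ε * (X : ℤ) * q' + sfun X h m' + dd h m' * ((i' + 1 : ℕ) : ℤ) + 1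
            rw [hd]; push_cast; ring
          · rfl
    · have hiX' : i' + 1 = X := by omega
      have hiZ' : (i' : ℤ) = (X : ℤ) - 1 := by omega
      by_cases hmk : m' + 1 < k
      · -- vertical edge
        have ht1 : (k : ℤ) * (X : ℤ) * q' + ((X : ℤ) * (m' : ℤ) + (i' : ℤ)) + 1 =
            (k : ℤ) * (X : ℤ) * q' + ((X : ℤ) * ((m' + 1 : ℕ) : ℤ) + ((0 : ℕ) : ℤ)) := by
          rw [hiZ']; push_cast; ring
        rw [ht1, FF_eval k X h ε hk0 q' (m' + 1) 0 hmk hX]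
        have hcol : ε * (X : ℤ) * q' + sfun X h m' + dd h m' * (i' : ℤ) =
            ε * (X : ℤ) * q' + sfun X h (m' + 1) + dd h (m' + 1) * ((0 : ℕ) : ℤ) := by
          rw [sfun_succ X h m', hiZ']; push_cast; ring
        rw [hcol]
        set E := ε * (X : ℤ) * q' + sfun X h (m' + 1) + dd h (m' + 1) * ((0 : ℕ) : ℤ) with hE
        have hE' : E = ε * (X : ℤ) * q' + sfun X h (m' + 1) := by
          rw [hE]; push_cast; ring
        obtain ⟨c, hc⟩ := sfun_parity X h (m' + 1) y hy
        constructor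
        · intro hpq
          rw [Prod.mk.injEq] at hpq
          obtain ⟨-, h2⟩ := hpq
          have h3 := congrArg ZMod.val h2
          rw [ZMod.val_cast_of_lt hm', ZMod.val_cast_of_lt hmk] at h3
          omega
        · left; unfold cylStep
          right; left
          rcases Nat.even_or_odd m' with hpar | hpar
          · obtain ⟨u, hu⟩ := hpar
            have huz : (m' : ℤ) = 2 * (u : ℤ) := by omega
            refine ⟨ε * (y : ℤ) * q' + c + (u : ℤ) + 1, m', by omega, Or.inl ⟨⟨u, hu⟩, ?_, ?_⟩⟩
            · rw [Prod.mk.injEq]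
              refine ⟨?_, rfl⟩
              rw [hE']
              linear_combination (norm := (push_cast; ring1)) (ε * q') * hyz + hc + huz
            · rw [Prod.mk.injEq]
              refine ⟨?_, rfl⟩
              rw [hE']
              linear_combination (norm := (push_cast; ring1)) (ε * q') * hyz + hc + huz
          · obtain ⟨u, hu⟩ := hpar
            have huz : (m' : ℤ) = 2 * (u : ℤ) + 1 := by omega
            refine ⟨ε * (y : ℤ) * q' + c + (u : ℤ) + 1, m', by omega, Or.inr ⟨⟨u, by omega⟩, ?_, ?_⟩⟩
            · rw [Prod.mk.injEq]
              refine ⟨?_, rfl⟩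
              rw [hE']
              linear_combination (norm := (push_cast; ring1)) (ε * q') * hyz + hc + huz
            · rw [Prod.mk.injEq]
              refine ⟨?_, rfl⟩
              rw [hE']
              linear_combination (norm := (push_cast; ring1)) (ε * q') * hyz + hc + huz
      · -- twisted edge
        have hmk' : m' + 1 = k := by omega
        have ht1 : (k : ℤ) * (X : ℤ) * q' + ((X : ℤ) * (m' : ℤ) + (i' : ℤ)) + 1 =
            (k : ℤ) * (X : ℤ) * (q' + 1) + ((X : ℤ) * ((0 : ℕ) : ℤ) + ((0 : ℕ) : ℤ)) := by
          rw [hiZ']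
          have hmz : (m' : ℤ) = (k : ℤ) - 1 := by omega
          rw [hmz]; push_cast; ring
        rw [ht1, FF_eval k X h ε hk0 (q' + 1) 0 0 hk0 hX]
        have hsucc : sfun X h k = sfun X h m' + dd h m' * ((X : ℤ) - 1) := by
          have := sfun_succ X h m'
          rwa [hmk'] at this
        have hcol : ε * (X : ℤ) * q' + sfun X h m' + dd h m' * (i' : ℤ) =
            ε * (X : ℤ) * q' + 1 + ε * (X : ℤ) - (l : ℤ) := by
          rw [hiZ']
          linear_combination hsum - hsucc
        rw [hcol]
        set E := ε * (X : ℤ) * q' + 1 + ε * (X : ℤ) - (l : ℤ) with hEdef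
        obtain ⟨c, hc⟩ := sfun_parity X h k y hy
        have hk2 : ε * (X : ℤ) - (l : ℤ) = (k : ℤ) + 2 * c := by
          linear_combination hc - hsum
        constructor
        · intro hpq
          rw [Prod.mk.injEq] at hpq
          obtain ⟨-, h2⟩ := hpq
          have h3 := congrArg ZMod.val h2
          rw [ZMod.val_cast_of_lt hm', ZMod.val_cast_of_lt (show (0:ℕ) < k by omega)] at h3
          omega
        · left; unfold cylStep
          right; right
          have hm'k : m' = k - 1 := by omega
          rcases Nat.even_or_odd k with hpar | hpar
          · obtain ⟨u, hu⟩ := hpar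
            have huz : (k : ℤ) = 2 * (u : ℤ) := by omega
            left
            refine ⟨⟨u, hu⟩, ε * (y : ℤ) * q' + (u : ℤ) + c, ?_, ?_⟩
            · rw [Prod.mk.injEq]
              refine ⟨?_, by rw [hm'k]⟩
              rw [hEdef]
              linear_combination (norm := (push_cast; ring1)) (ε * q') * hyz + hk2 + huz
            · rw [Prod.mk.injEq]
              refine ⟨?_, by push_cast; ring⟩
              rw [sfun_zero]
              have hEn : E = 2 * (ε * (y : ℤ) * q' + (u : ℤ) + c) + 1 := by
                rw [hEdef]
                linear_combination (norm := (push_cast; ring1)) (ε * q') * hyz + hk2 + huz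
              linear_combination (norm := (push_cast; ring1)) hEn - hEdef
          · obtain ⟨u, hu⟩ := hpar
            have huz : (k : ℤ) = 2 * (u : ℤ) + 1 := by omega
            right
            refine ⟨⟨u, by omega⟩, ε * (y : ℤ) * q' + (u : ℤ) + c + 1, ?_, ?_⟩
            · rw [Prod.mk.injEq]
              refine ⟨?_, by rw [hm'k]⟩
              rw [hEdef]
              linear_combination (norm := (push_cast; ring1)) (ε * q') * hyz + hk2 + huz
            · rw [Prod.mk.injEq]
              refine ⟨?_, by push_cast; ring⟩
              rw [sfun_zero]
              have hEn : E = 2 * (ε * (y : ℤ) * q' + (u : ℤ) + c + 1) := by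
                rw [hEdef]
                linear_combination (norm := (push_cast; ring1)) (ε * q') * hyz + hk2 + huz
              linear_combination (norm := (push_cast; ring1)) hEn - hEdef

end TwistHamAux

theorem cylinder_hamiltonian_double_ray (k l : ℕ) (hk : 2 ≤ k) (hkl : Even (k + l)) :
    HasHamiltonianDoubleRay (twistedCylinder k (l : ℤ)) := by
  obtain ⟨a, ha⟩ := hkl
  rcases Nat.even_or_odd l with hl | hl
  · -- k, l even : X = l + 2, h = k / 2 - 1, ε = -1
    obtain ⟨b, hb⟩ := hl
    refine TwistHamAux.core k l (l + 2) (k / 2 - 1) (b + 1) (-1) hk (by omega) (by omega)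
      (by norm_num) ?_
    have hmin : 2 * ((min k (k / 2 - 1) : ℕ) : ℤ) - (k : ℤ) = -2 := by omega
    unfold TwistHamAux.sfun
    rw [hmin]
    push_cast
    ring_nf
  · obtain ⟨b, hb⟩ := hl
    rcases (show l % 4 = 1 ∨ l % 4 = 3 by omega) with hl4 | hl4
    · -- l ≡ 1 mod 4 : X = (l + 3) / 2, h = (k - 3) / 2, ε = -1
      refine TwistHamAux.core k l ((l + 3) / 2) ((k - 3) / 2) ((l + 3) / 4) (-1) hk
        (by omega) (by omega) (by norm_num) ?_
      have hmin : 2 * ((min k ((k - 3) / 2) : ℕ) : ℤ) - (k : ℤ) = -3 := by omega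
      unfold TwistHamAux.sfun
      rw [hmin]
      have hX : (((l + 3) / 2 : ℕ) : ℤ) = ((l : ℤ) + 3) / 2 := by omega
      ring_nf
      omega
    · -- l ≡ 3 mod 4 : X = (l + 1) / 2, h = (k - 1) / 2, ε = 1
      refine TwistHamAux.core k l ((l + 1) / 2) ((k - 1) / 2) ((l + 1) / 4) 1 hk
        (by omega) (by omega) (by norm_num) ?_
      have hmin : 2 * ((min k ((k - 1) / 2) : ℕ) : ℤ) - (k : ℤ) = -1 := by omega
      unfold TwistHamAux.sfun
      rw [hmin]
      ring_nf
      omega
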